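/- There exists a positive integer c, depending only on C1, C2, s0, ε0, r, q and m, such that for every k ≥ k0, every n ≥ c·φ_k, every n-optimal set α_n ∈ C_{n,r}(μ), every Voronoi partition (P_a(α_n))_{a∈α_n}, and every a ∈ α_n: the index set Γ := {σ ∈ Ω_k : d(a,c_σ) ≤ (13/2)·m^{-k}} satisfies card(Γ) ≤ (15/2)^q and P_a(α_n) ∩ K ⊆ ⋃_{σ∈Γ} A_σ. -/

import Mathlib

open MeasureTheory Metric Set

noncomputable section

variable {E : Type*} [NormedAddCommGroup E] [NormedSpace ℝ E]
  [MeasurableSpace E] [BorelSpace E]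

/-- The (topological) support of a Borel measure: the set of points all of whose
neighborhoods have positive measure. -/
def msupp (μ : Measure E) : Set E := {x | ∀ ε : ℝ, 0 < ε → 0 < μ (ball x ε)}

/-- The set of achievable quantization integrals `∫ d(x,α)^r dν` over sets `α` with
`1 ≤ card α ≤ n`. -/
def quantSet (ν : Measure E) (r : ℝ) (n : ℕ) : Set ℝ :=
  {I | ∃ α : Finset E, α.Nonempty ∧ α.card ≤ n ∧ I = ∫ x, infDist x (α : Set E) ^ r ∂ν}

/-- The `n`-th quantization error of order `r`, raised to the power `r`:
`e_{n,r}(ν)^r = inf { ∫ d(x,α)^r dν : 1 ≤ card α ≤ n }`. -/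
def quantErrPow (ν : Measure E) (r : ℝ) (n : ℕ) : ℝ := sInf (quantSet ν r n)

/-- `α` is an `n`-optimal set for `ν` of order `r`. -/
def IsOptimalSet (ν : Measure E) (r : ℝ) (n : ℕ) (α : Finset E) : Prop :=
  α.Nonempty ∧ α.card ≤ n ∧ (∫ x, infDist x (α : Set E) ^ r ∂ν) = quantErrPow ν r n

/-- `P` is a Voronoi partition (into Borel sets) with respect to the finite set `α`. -/
def IsVoronoiPartition (α : Finset E) (P : E → Set E) : Prop :=
  (∀ a ∈ α, MeasurableSet (P a)) ∧
  ((⋃ a ∈ α, P a) = univ) ∧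
  (∀ a ∈ α, ∀ b ∈ α, a ≠ b → Disjoint (P a) (P b)) ∧
  (∀ a ∈ α, {x | dist x a < infDist x ((α : Set E) \ {a})} ⊆ P a) ∧
  (∀ a ∈ α, P a ⊆ {x | dist x a = infDist x (α : Set E)})

/-- `I_a(α,ν) = ∫_{P_a(α)} d(x,α)^r dν`. -/
def voronoiI (ν : Measure E) (r : ℝ) (α : Finset E) (P : E → Set E) (a : E) : ℝ :=
  ∫ x in P a, infDist x (α : Set E) ^ r ∂ν

/-- `μ` is `s0`-dimensional Ahlfors–David regular with constants `ε0, C1, C2`, together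
with the global upper bound (valid for all centers and radii). -/
def IsAhlfors (μ : Measure E) (s0 ε0 C1 C2 : ℝ) : Prop :=
  0 < s0 ∧ 0 < ε0 ∧ 0 < C1 ∧ 0 < C2 ∧
  (∀ x ∈ msupp μ, ∀ ε : ℝ, 0 < ε → ε < ε0 →
    ENNReal.ofReal (C1 * ε ^ s0) ≤ μ (closedBall x ε) ∧
    μ (closedBall x ε) ≤ ENNReal.ofReal (C2 * ε ^ s0)) ∧
  (∀ x : E, ∀ ε : ℝ, 0 < ε → μ (closedBall x ε) ≤ ENNReal.ofReal (C2 * ε ^ s0))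

/-- `h` is a similitude of ratio `ρ`. -/
def IsSimilitude (h : E → E) (ρ : ℝ) : Prop :=
  Function.Surjective h ∧ ∀ x y, dist (h x) (h y) = ρ * dist x y

/-- The measure `λ_B = μ(·|B) ∘ h`, i.e. `λ_B(A) = μ(h(A) ∩ B)/μ(B)`. -/
def condPull (μ : Measure E) (B : Set E) (h : E → E) : Measure E :=
  Measure.comap h (ProbabilityTheory.cond μ B)

/-- There exist `j` pairwise disjoint closed balls of radius `ρ` centered in `K`. -/
def PackingNum (K : Set E) (ρ : ℝ) (j : ℕ) : Prop :=
  ∃ c : Fin j → E, (∀ i, c i ∈ K) ∧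
    Pairwise fun i i' => Disjoint (closedBall (c i) ρ) (closedBall (c i') ρ)

end


open scoped ENNReal NNReal

set_option linter.unusedSectionVars false
set_option maxHeartbeats 1000000

noncomputable section AuxLemmas

variable {E : Type*} [NormedAddCommGroup E] [NormedSpace ℝ E]
  [MeasurableSpace E] [BorelSpace E]

theorem msupp_isClosed (μ : Measure E) : IsClosed (msupp μ) := by
  rw [← isOpen_compl_iff, Metric.isOpen_iff]
  intro x hx
  simp only [mem_compl_iff, msupp, mem_setOf_eq, not_forall] at hx
  obtain ⟨ε, hε, hμε⟩ := hx
  refine ⟨ε / 2, by linarith, fun z hz => ?_⟩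
  intro hzK
  have h2 : μ (ball z (ε / 2)) ≤ μ (ball x ε) := by
    apply measure_mono
    intro w hw
    have := mem_ball.1 hw
    have := mem_ball.1 hz
    exact mem_ball.2 (by
      calc dist w x ≤ dist w z + dist z x := dist_triangle _ _ _
        _ < ε / 2 + ε / 2 := by linarith
        _ = ε := by ring)
  have h3 : μ (ball x ε) = 0 := le_antisymm (not_lt.1 hμε) zero_le
  have := hzK (ε / 2) (by linarith)
  rw [h3] at h2
  exact absurd (le_antisymm h2 zero_le) (ne_of_gt this)

theorem msupp_compl_null [SecondCountableTopology E] (μ : Measure E) :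
    μ (msupp μ)ᶜ = 0 := by
  apply measure_null_of_locally_null
  intro x hx
  simp only [mem_compl_iff, msupp, mem_setOf_eq, not_forall] at hx
  obtain ⟨ε, hε, hμε⟩ := hx
  exact ⟨ball x ε, mem_nhdsWithin_of_mem_nhds (ball_mem_nhds x hε),
    le_antisymm (not_lt.1 hμε) zero_le⟩

theorem msupp_ae [SecondCountableTopology E] (μ : Measure E) :
    ∀ᵐ y ∂μ, y ∈ msupp μ := by
  rw [ae_iff]
  exact msupp_compl_null μ

theorem msupp_nonempty [SecondCountableTopology E] (μ : Measure E)
    [IsProbabilityMeasure μ] : (msupp μ).Nonempty := by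
  rcases eq_empty_or_nonempty (msupp μ) with h | h
  · exfalso
    have := msupp_compl_null μ
    rw [h, compl_empty, measure_univ] at this
    simp at this
  · exact h

theorem packing_of_finset (K : Set E) {ρ0 : ℝ} (hρ0 : 0 < ρ0) (F : Finset E)
    (hFK : ↑F ⊆ K) (hsep : ∀ x ∈ F, ∀ y ∈ F, x ≠ y → 2 * ρ0 < dist x y) :
    PackingNum K ρ0 F.card := by
  refine ⟨fun i => (F.equivFin.symm i : E), fun i => hFK (F.equivFin.symm i).2, ?_⟩
  intro i j hij
  have hne : ((F.equivFin.symm i : E)) ≠ ((F.equivFin.symm j : E)) := by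
    intro h
    exact hij (F.equivFin.symm.injective (Subtype.ext h))
  apply closedBall_disjoint_closedBall
  have := hsep _ (F.equivFin.symm i).2 _ (F.equivFin.symm j).2 hne
  linarith

theorem bounded_of_packing (K : Set E) {ρ0 : ℝ} (hρ0 : 0 < ρ0) (N : ℕ)
    (hN : ∀ j, PackingNum K ρ0 j → j ≤ N) : Bornology.IsBounded K := by
  classical
  set S : Set ℕ := {j | ∃ F : Finset E, ↑F ⊆ K ∧
    (∀ x ∈ F, ∀ y ∈ F, x ≠ y → 2 * ρ0 < dist x y) ∧ F.card = j} with hS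
  have hne : S.Nonempty := ⟨0, ∅, by simp, by simp, rfl⟩
  have hbd : BddAbove S := by
    refine ⟨N, fun j hj => ?_⟩
    obtain ⟨F, h1, h2, h3⟩ := hj
    exact h3 ▸ hN _ (packing_of_finset K hρ0 F h1 h2)
  obtain ⟨F, hFK, hsep, hcard⟩ := Nat.sSup_mem hne hbd
  have hcover : K ⊆ ⋃ z ∈ F, closedBall z (2 * ρ0) := by
    intro y hy
    by_contra hyc
    simp only [mem_iUnion, mem_closedBall, not_exists, not_le] at hyc
    have hyF : y ∉ F := fun h => by
      have := hyc y h; simp at this; linarith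
    have : (insert y F).card ∈ S := by
      refine ⟨insert y F, ?_, ?_, rfl⟩
      · intro z hz
        rcases Finset.mem_insert.1 hz with h | h
        · exact h ▸ hy
        · exact hFK h
      · intro u hu v hv huv
        rcases Finset.mem_insert.1 hu with hu' | hu' <;>
          rcases Finset.mem_insert.1 hv with hv' | hv'
        · exact absurd (hu'.trans hv'.symm) huv
        · rw [hu']
          exact hyc v hv'
        · rw [hv', dist_comm]
          exact hyc u hu'
        · exact hsep u hu' v hv' huv
    have h1 := le_csSup hbd this
    rw [Finset.card_insert_of_notMem hyF, hcard] at h1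
    omega
  have : Bornology.IsBounded (⋃ z ∈ F, closedBall z (2 * ρ0)) :=
    (Bornology.isBounded_biUnion F.finite_toSet).2 fun z _ => isBounded_closedBall
  exact this.subset hcover

theorem exists_near_center {K : Set E} {ρ : ℝ} (hρ : 0 < ρ) {φk : ℕ}
    (hg : IsGreatest {j | PackingNum K ρ j} φk) (c : Fin φk → E)
    (hcK : ∀ i, c i ∈ K)
    (hd : Pairwise fun i i' => Disjoint (closedBall (c i) ρ) (closedBall (c i') ρ))
    {x : E} (hx : x ∈ K) : ∃ σ, dist x (c σ) ≤ 2 * ρ := by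
  by_contra hcon
  push_neg at hcon
  have hpack : PackingNum K ρ (φk + 1) := by
    refine ⟨Fin.snoc c x, ?_, ?_⟩
    · intro i
      rcases Fin.eq_castSucc_or_eq_last i with ⟨j, rfl⟩ | rfl
      · simpa using hcK j
      · simpa using hx
    · intro i j hij
      rcases Fin.eq_castSucc_or_eq_last i with ⟨i', rfl⟩ | rfl <;>
        rcases Fin.eq_castSucc_or_eq_last j with ⟨j', rfl⟩ | rfl
      · simp only [Fin.snoc_castSucc]
        exact hd (fun h => hij (by rw [h]))
      · simp only [Fin.snoc_castSucc, Fin.snoc_last]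
        apply closedBall_disjoint_closedBall
        have := hcon i'
        rw [dist_comm] at this
        linarith
      · simp only [Fin.snoc_castSucc, Fin.snoc_last]
        apply closedBall_disjoint_closedBall
        have := hcon j'
        linarith
      · exact absurd rfl hij
  have := hg.2 hpack
  omega

theorem count_lemma [FiniteDimensional ℝ E] {q : ℕ} (hq : Module.finrank ℝ E = q)
    {ρ : ℝ} (hρ : 0 < ρ) {N : ℕ} (c : Fin N → E)
    (hd : Pairwise fun i i' => Disjoint (closedBall (c i) ρ) (closedBall (c i') ρ))
    (a : E) :
    (({σ : Fin N | dist a (c σ) ≤ (13 / 2 : ℝ) * ρ}.ncard : ℝ)) ≤ (15 / 2 : ℝ) ^ q := by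
  classical
  set s : Set (Fin N) := {σ : Fin N | dist a (c σ) ≤ (13 / 2 : ℝ) * ρ} with hs
  have hsfin : s.Finite := s.toFinite
  set Γ : Finset (Fin N) := hsfin.toFinset with hΓ
  have hncard : s.ncard = Γ.card := Set.ncard_eq_toFinset_card s hsfin
  set ν : Measure E := (Module.finBasis ℝ E).addHaar with hν
  have hVpos : ν (ball 0 1) ≠ 0 := (measure_ball_pos ν 0 one_pos).ne'
  have hVtop : ν (ball 0 1) ≠ ⊤ := measure_ball_lt_top.ne
  have hsum : ∑ σ ∈ Γ, ν (closedBall (c σ) ρ) = ν (⋃ σ ∈ Γ, closedBall (c σ) ρ) :=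
    (measure_biUnion_finset (fun i _ j _ hij => hd hij)
      (fun _ _ => measurableSet_closedBall)).symm
  have hmono : ν (⋃ σ ∈ Γ, closedBall (c σ) ρ) ≤ ν (closedBall a ((15 / 2 : ℝ) * ρ)) := by
    apply measure_mono
    intro y hy
    simp only [mem_iUnion] at hy
    obtain ⟨σ, hσ, hyσ⟩ := hy
    have hσs : σ ∈ s := by rwa [hΓ, Set.Finite.mem_toFinset] at hσ
    have h1 : dist y (c σ) ≤ ρ := mem_closedBall.1 hyσ
    have h2 : dist a (c σ) ≤ (13 / 2 : ℝ) * ρ := hσs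
    exact mem_closedBall.2 (by
      calc dist y a ≤ dist y (c σ) + dist (c σ) a := dist_triangle _ _ _
        _ ≤ ρ + (13 / 2 : ℝ) * ρ := by rw [dist_comm (c σ) a]; linarith
        _ = (15 / 2 : ℝ) * ρ := by ring)
  have hballσ : ∀ σ : Fin N, ν (closedBall (c σ) ρ)
      = ENNReal.ofReal (ρ ^ q) * ν (ball 0 1) := by
    intro σ
    rw [ν.addHaar_closedBall (c σ) hρ.le, hq]
  have hballa : ν (closedBall a ((15 / 2 : ℝ) * ρ))
      = ENNReal.ofReal (((15 / 2 : ℝ) * ρ) ^ q) * ν (ball 0 1) := by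
    rw [ν.addHaar_closedBall a (by positivity), hq]
  have hkey : (Γ.card : ℝ≥0∞) * ENNReal.ofReal (ρ ^ q) * ν (ball 0 1)
      ≤ ENNReal.ofReal (((15 / 2 : ℝ) * ρ) ^ q) * ν (ball 0 1) := by
    calc (Γ.card : ℝ≥0∞) * ENNReal.ofReal (ρ ^ q) * ν (ball 0 1)
        = ∑ σ ∈ Γ, ν (closedBall (c σ) ρ) := by
          rw [Finset.sum_congr rfl (fun σ _ => hballσ σ), Finset.sum_const, nsmul_eq_mul,
            mul_assoc]
      _ ≤ ν (closedBall a ((15 / 2 : ℝ) * ρ)) := hsum ▸ hmono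
      _ = _ := hballa
  have hkey2 : (Γ.card : ℝ≥0∞) * ENNReal.ofReal (ρ ^ q)
      ≤ ENNReal.ofReal (((15 / 2 : ℝ) * ρ) ^ q) :=
    (ENNReal.mul_le_mul_iff_left hVpos hVtop).1 hkey
  have hkey3 : (Γ.card : ℝ) * ρ ^ q ≤ ((15 / 2 : ℝ) * ρ) ^ q := by
    have := ENNReal.toReal_mono (by exact ENNReal.ofReal_ne_top) hkey2
    rw [ENNReal.toReal_mul, ENNReal.toReal_ofReal (by positivity : (0:ℝ) ≤ ρ ^ q)] at this
    rw [ENNReal.toReal_ofReal (by positivity : (0:ℝ) ≤ ((15/2:ℝ)*ρ)^q)] at this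
    simpa using this
  rw [hncard]
  rw [mul_pow] at hkey3
  have hρq : (0:ℝ) < ρ ^ q := by positivity
  nlinarith [hkey3, hρq]

theorem quantSet_bddBelow (ν : Measure E) (r : ℝ) (n : ℕ) :
    BddBelow (quantSet ν r n) := by
  refine ⟨0, fun I hI => ?_⟩
  obtain ⟨γ, -, -, rfl⟩ := hI
  exact integral_nonneg fun y => Real.rpow_nonneg infDist_nonneg r

theorem optimal_le {ν : Measure E} {r : ℝ} {n : ℕ} {α : Finset E}
    (hopt : IsOptimalSet ν r n α) (γ : Finset E) (hγ : γ.Nonempty) (hc : γ.card ≤ n) :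
    (∫ x, infDist x (α : Set E) ^ r ∂ν) ≤ ∫ x, infDist x (γ : Set E) ^ r ∂ν := by
  rw [hopt.2.2]
  exact csInf_le (quantSet_bddBelow ν r n) ⟨γ, hγ, hc, rfl⟩

theorem integrable_infDist_rpow (μ : Measure E) [IsFiniteMeasure μ] {r : ℝ} (hr : 0 < r)
    (γ : Finset E) (hγ : γ.Nonempty) {z0 : E} {R : ℝ}
    (hae : ∀ᵐ y ∂μ, dist y z0 ≤ R) :
    Integrable (fun y => infDist y (γ : Set E) ^ r) μ := by
  obtain ⟨b0, hb0⟩ := hγ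
  have hcont : Continuous fun y : E => infDist y (γ : Set E) ^ r :=
    (continuous_infDist_pt _).rpow_const fun _ => Or.inr hr.le
  refine Integrable.mono' (integrable_const ((R + dist z0 b0) ^ r)) hcont.aestronglyMeasurable ?_
  filter_upwards [hae] with y hy
  rw [Real.norm_of_nonneg (Real.rpow_nonneg infDist_nonneg r)]
  apply Real.rpow_le_rpow infDist_nonneg _ hr.le
  calc infDist y (γ : Set E) ≤ dist y b0 := infDist_le_dist_of_mem hb0
    _ ≤ dist y z0 + dist z0 b0 := dist_triangle _ _ _
    _ ≤ R + dist z0 b0 := by linarith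

/-- the infimum over a nonempty finset is attained -/
theorem finset_infDist_attained (γ : Finset E) (hγ : γ.Nonempty) (x : E) :
    ∃ b ∈ γ, infDist x (γ : Set E) = dist x b := by
  have : IsCompact (γ : Set E) := γ.finite_toSet.isCompact
  obtain ⟨b, hb, hbd⟩ := this.exists_infDist_eq_dist (by exact_mod_cast hγ) x
  exact ⟨b, by exact_mod_cast hb, hbd⟩

theorem le_infDist_finset {γ : Finset E} (hγ : γ.Nonempty) {x : E} {b : ℝ}
    (h : ∀ z ∈ γ, b ≤ dist x z) : b ≤ infDist x (γ : Set E) := by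
  obtain ⟨z, hz, hzd⟩ := finset_infDist_attained γ hγ x
  rw [hzd]; exact h z hz


section CoveringRadius

variable [SecondCountableTopology E] [ProperSpace E]

theorem optimal_le' {ν : Measure E} {r : ℝ} {n : ℕ} {α : Finset E}
    (hopt : IsOptimalSet ν r n α) (γ : Finset E) (hγ : γ.Nonempty) (hc : γ.card ≤ n) :
    (∫ x, infDist x (α : Set E) ^ r ∂ν) ≤ ∫ x, infDist x (γ : Set E) ^ r ∂ν := by
  rw [hopt.2.2]
  exact csInf_le (quantSet_bddBelow ν r n) ⟨γ, hγ, hc, rfl⟩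

theorem integrable_infDist_rpow' (μ : Measure E) [IsFiniteMeasure μ] {r : ℝ} (hr : 0 < r)
    (γ : Finset E) (hγ : γ.Nonempty) {z0 : E} {R : ℝ}
    (hae : ∀ᵐ y ∂μ, dist y z0 ≤ R) :
    Integrable (fun y => infDist y (γ : Set E) ^ r) μ := by
  obtain ⟨b0, hb0⟩ := hγ
  have hcont : Continuous fun y : E => infDist y (γ : Set E) ^ r :=
    (continuous_infDist_pt _).rpow_const fun _ => Or.inr hr.le
  refine Integrable.mono' (integrable_const ((R + dist z0 b0) ^ r)) hcont.aestronglyMeasurable ?_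
  filter_upwards [hae] with y hy
  rw [Real.norm_of_nonneg (Real.rpow_nonneg infDist_nonneg r)]
  apply Real.rpow_le_rpow infDist_nonneg _ hr.le
  calc infDist y (γ : Set E) ≤ dist y b0 := infDist_le_dist_of_mem hb0
    _ ≤ dist y z0 + dist z0 b0 := dist_triangle _ _ _
    _ ≤ R + dist z0 b0 := by linarith

theorem finset_infDist_attained' (γ : Finset E) (hγ : γ.Nonempty) (x : E) :
    ∃ b ∈ γ, infDist x (γ : Set E) = dist x b := by
  have : IsCompact (γ : Set E) := γ.finite_toSet.isCompact
  obtain ⟨b, hb, hbd⟩ := this.exists_infDist_eq_dist (by exact_mod_cast hγ) x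
  exact ⟨b, by exact_mod_cast hb, hbd⟩

theorem le_infDist_finset' {γ : Finset E} (hγ : γ.Nonempty) {x : E} {b : ℝ}
    (h : ∀ z ∈ γ, b ≤ dist x z) : b ≤ infDist x (γ : Set E) := by
  obtain ⟨z, hz, hzd⟩ := finset_infDist_attained' γ hγ x
  rw [hzd]; exact h z hz

theorem covering_radius
    {r : ℝ} (hr : 0 < r)
    (μ : Measure E) [IsProbabilityMeasure μ]
    {s0 ε0 C1 C2 : ℝ} (hμ : IsAhlfors μ s0 ε0 C1 C2)
    {z0 : E} {R : ℝ} (hR : 1 ≤ R) (hKb : msupp μ ⊆ closedBall z0 R) (hz0 : z0 ∈ msupp μ)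
    {ρ : ℝ} (hρ : 0 < ρ)
    {φk : ℕ} (hφ1 : 1 ≤ φk)
    (ctr : Fin φk → E) (hcov : ∀ x ∈ msupp μ, ∃ σ, dist x (ctr σ) ≤ 2 * ρ)
    {c : ℕ} (hc2 : 2 ≤ c)
    (hcbig : (4:ℝ)^r * 3^s0 * (max 3 (8*R/ε0))^r * (max 3 (8*R/ε0))^s0 * C2
      / (C1 * ((2:ℝ)^r - 1)) < c)
    {n : ℕ} (hn : c * φk ≤ n)
    {α : Finset E} (hopt : IsOptimalSet μ r n α)
    {P : E → Set E} (hP : IsVoronoiPartition α P) :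
    ∀ x ∈ msupp μ, infDist x (α : Set E) ≤ (9/2) * ρ := by
  classical
  intro x0 hx0
  by_contra hx0c
  push_neg at hx0c
  obtain ⟨hs0, hε0, hC1, hC2, hloc, hglob⟩ := hμ
  set K := msupp μ with hK
  have hKmeas : MeasurableSet K := (msupp_isClosed μ).measurableSet
  have hae : ∀ᵐ y ∂μ, y ∈ K := msupp_ae μ
  have haeR : ∀ᵐ y ∂μ, dist y z0 ≤ R := by
    filter_upwards [hae] with y hy
    exact mem_closedBall.1 (hKb hy)
  have hKcomp : IsCompact K :=
    (isCompact_closedBall z0 R).of_isClosed_subset (msupp_isClosed μ) hKb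
  have hKne : K.Nonempty := ⟨z0, hz0⟩
  have hint : ∀ γ : Finset E, γ.Nonempty →
      Integrable (fun y => infDist y (γ : Set E) ^ r) μ :=
    fun γ h => integrable_infDist_rpow' μ hr γ h haeR
  have hαne := hopt.1
  -- maximum of infDist over K
  obtain ⟨x, hxK, hxmax'⟩ := hKcomp.exists_isMaxOn hKne
    ((continuous_infDist_pt (α : Set E)).continuousOn)
  set T := infDist x (α : Set E) with hT
  have hTle : ∀ y ∈ K, infDist y (α : Set E) ≤ T := fun y hy => hxmax' hy
  have hTgt : 9/2 * ρ < T := lt_of_lt_of_le hx0c (hTle x0 hx0)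
  have hTpos : 0 < T := lt_trans (by positivity) hTgt
  have hρT : 4 * ρ ≤ T := by linarith
  have hnc : (2:ℕ) ≤ n := le_trans hc2 (le_trans (Nat.le_mul_of_pos_right c hφ1) hn)
  -- T ≤ 4R
  have hTD : T ≤ 4 * R := by
    have hy0 : ∃ y0 ∈ K, infDist y0 (α : Set E) ≤ 2 * R := by
      by_contra hcon
      push_neg at hcon
      obtain ⟨ym, hymK, hymin'⟩ := hKcomp.exists_isMinOn hKne
        ((continuous_infDist_pt (α : Set E)).continuousOn)
      set τ := infDist ym (α : Set E) with hτ
      have hτgt : 2 * R < τ := hcon ym hymK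
      have h1 : (τ:ℝ) ^ r ≤ ∫ y, infDist y (α : Set E) ^ r ∂μ := by
        have : ∫ _ : E, τ ^ r ∂μ ≤ ∫ y, infDist y (α : Set E) ^ r ∂μ := by
          apply integral_mono_ae (integrable_const _) (hint α hαne)
          filter_upwards [hae] with y hy
          exact Real.rpow_le_rpow (le_trans (by positivity) hτgt.le) (hymin' hy) hr.le
        simpa [integral_const] using this
      have h2 : (∫ y, infDist y (α : Set E) ^ r ∂μ)
          ≤ ∫ y, infDist y (({z0} : Finset E) : Set E) ^ r ∂μ :=
        optimal_le' hopt {z0} ⟨z0, Finset.mem_singleton_self z0⟩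
          (by simpa using le_trans (by norm_num) hnc)
      have h3 : (∫ y, infDist y (({z0} : Finset E) : Set E) ^ r ∂μ) ≤ (2*R) ^ r := by
        have : ∫ y, infDist y (({z0} : Finset E) : Set E) ^ r ∂μ ≤ ∫ _ : E, (2*R) ^ r ∂μ := by
          apply integral_mono_ae (hint {z0} ⟨z0, Finset.mem_singleton_self z0⟩)
            (integrable_const _)
          filter_upwards [haeR] with y hy
          apply Real.rpow_le_rpow infDist_nonneg _ hr.le
          have : infDist y (({z0} : Finset E) : Set E) = dist y z0 := by simp
          rw [this]; linarith
        simpa [integral_const] using this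
      have h4 : (2*R) ^ r < τ ^ r :=
        Real.rpow_lt_rpow (by linarith) hτgt hr
      linarith
    obtain ⟨y0, hy0K, hy0d⟩ := hy0
    obtain ⟨astar, hastar, hadist⟩ := finset_infDist_attained' α hαne y0
    have h5 : dist y0 astar ≤ 2 * R := hadist ▸ hy0d
    have h6 : infDist x (α : Set E) ≤ dist x astar := infDist_le_dist_of_mem (by
      exact_mod_cast hastar)
    have h7 : dist x y0 ≤ 2 * R := by
      have hx1 := mem_closedBall.1 (hKb hxK)
      have hx2 := mem_closedBall.1 (hKb hy0K)
      calc dist x y0 ≤ dist x z0 + dist z0 y0 := dist_triangle _ _ _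
        _ ≤ R + R := by rw [dist_comm z0 y0]; exact add_le_add hx1 hx2
        _ = 2 * R := by ring
    calc T ≤ dist x astar := h6
      _ ≤ dist x y0 + dist y0 astar := dist_triangle _ _ _
      _ ≤ 2*R + 2*R := add_le_add h7 h5
      _ = 4 * R := by ring
  -- the radius g
  set g := min (T/3) (ε0/2) with hg
  have hgpos : 0 < g := lt_min (by linarith) (by linarith)
  have hgε : g < ε0 := lt_of_le_of_lt (min_le_right _ _) (by linarith)
  have hgT : g ≤ T/3 := min_le_left _ _
  have hg2 : 2 * g ≤ T - g := by linarith
  set Q : ℝ := max 3 (8*R/ε0) with hQ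
  have hQ3 : (3:ℝ) ≤ Q := le_max_left _ _
  have hQpos : 0 < Q := by linarith
  have hTQ : T ≤ Q * g := by
    rcases le_total (T/3) (ε0/2) with hcase | hcase
    · rw [hg, min_eq_left hcase]
      nlinarith
    · rw [hg, min_eq_right hcase]
      have h8 : 8*R/ε0 ≤ Q := le_max_right _ _
      have h9 : (8*R/ε0)*(ε0/2) = 4*R := by field_simp; ring
      nlinarith
  -- measure of the gain ball
  have hgain : C1 * g ^ s0 ≤ (μ (closedBall x g)).toReal := by
    have h1 := (hloc x hxK g hgpos hgε).1
    have h2 : (ENNReal.ofReal (C1 * g ^ s0)).toReal ≤ (μ (closedBall x g)).toReal :=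
      ENNReal.toReal_mono (ne_of_lt (lt_of_le_of_lt (measure_mono (subset_univ _))
        (by simp [lt_top_iff_ne_top]))) h1
    rwa [ENNReal.toReal_ofReal (by positivity)] at h2
  -- construct the competitor
  have hxnotα : x ∉ α := by
    intro hmem
    have : T = 0 := by
      have := infDist_le_dist_of_mem (s := (α : Set E)) (x := x) (y := x)
        (by exact_mod_cast hmem)
      simp at this
      exact le_antisymm this infDist_nonneg
    linarith
  have hW : (0:ℝ) ≤ C2 * (3*T) ^ s0 / c := by positivity
  obtain ⟨β, hβne, hβc, S, hSmeas, hSsmall, hSbound, hoffS, hnotin⟩ :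
      ∃ β : Finset E, β.Nonempty ∧ β.card ≤ n ∧
        ∃ S : Set E, MeasurableSet S ∧ (μ S).toReal ≤ C2 * (3*T) ^ s0 / c ∧
        (∀ᵐ y ∂μ, y ∈ S → infDist y (β : Set E) ≤ 4 * T) ∧
        (∀ y, y ∉ S → infDist y (β : Set E) ≤ infDist y (α : Set E)) ∧
        (x ∈ (β : Set E)) := by
    rcases lt_or_eq_of_le hopt.2.1 with hlt | hcard
    · -- card α < n : just insert x
      refine ⟨insert x α, ⟨x, Finset.mem_insert_self _ _⟩, ?_, ∅,
        MeasurableSet.empty, by simpa using hW, ?_, ?_, by simp⟩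
      · exact le_trans (Finset.card_insert_le _ _) hlt
      · filter_upwards with y hy
        exact absurd hy (notMem_empty y)
      · intro y _
        apply infDist_le_infDist_of_subset _ (by exact_mod_cast hαne)
        intro z hz
        simp only [Finset.coe_insert, mem_insert_iff]
        right; exact_mod_cast hz
    · -- card α = n
      by_cases hall : ∀ a ∈ α, μ (P a) ≠ 0
      · -- all cells have positive measure: pigeonhole
        haveI : Nonempty (Fin φk) := ⟨⟨0, hφ1⟩⟩
        have hsel : ∀ a : E, ∃ σ : Fin φk, ∃ y : E,
            a ∈ α → (y ∈ P a ∩ K ∧ dist y (ctr σ) ≤ 2*ρ) := by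
          intro a
          by_cases ha : a ∈ α
          · have h1 : μ (P a ∩ K) = μ (P a) := by
              apply measure_inter_conull
              exact msupp_compl_null μ
            have h2 : (P a ∩ K).Nonempty := by
              apply nonempty_of_measure_ne_zero (μ := μ)
              rw [h1]; exact hall a ha
            obtain ⟨y, hy⟩ := h2
            obtain ⟨σ, hσ⟩ := hcov y hy.2
            exact ⟨σ, y, fun _ => ⟨hy, hσ⟩⟩
          · exact ⟨Classical.arbitrary _, x, fun h => absurd h ha⟩
        choose σf yf hsf using hsel
        have hyf : ∀ a ∈ α, yf a ∈ P a ∩ K := fun a ha => (hsf a ha).1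
        have hdf : ∀ a ∈ α, dist (yf a) (ctr (σf a)) ≤ 2*ρ := fun a ha => (hsf a ha).2
        have hpig : ∃ σs ∈ (Finset.univ : Finset (Fin φk)),
            c ≤ (α.filter fun a => σf a = σs).card := by
          apply Finset.exists_le_card_fiber_of_mul_le_card_of_maps_to
            (fun a _ => Finset.mem_univ _) Finset.univ_nonempty
          rw [Finset.card_univ, Fintype.card_fin]
          calc φk * c = c * φk := Nat.mul_comm _ _
            _ ≤ n := hn
            _ = α.card := hcard.symm
        obtain ⟨σs, -, hfib⟩ := hpig
        set Sσ := α.filter fun a => σf a = σs with hSσ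
        have hSσα : ∀ a ∈ Sσ, a ∈ α := fun a ha => (Finset.mem_filter.1 ha).1
        -- each a in Sσ is near ctr σs and its cell is in a controlled ball
        have hnear : ∀ a ∈ Sσ, dist a (ctr σs) ≤ T + 2*ρ := by
          intro a ha
          have haα := hSσα a ha
          have h1 : yf a ∈ P a ∩ K := hyf a haα
          have h2 : dist (yf a) (ctr (σf a)) ≤ 2*ρ := hdf a haα
          rw [(Finset.mem_filter.1 ha).2] at h2
          have h3 : dist (yf a) a = infDist (yf a) (α : Set E) :=
            hP.2.2.2.2 a haα h1.1
          have h4 : dist (yf a) a ≤ T := h3 ▸ hTle _ h1.2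
          calc dist a (ctr σs) ≤ dist a (yf a) + dist (yf a) (ctr σs) := dist_triangle _ _ _
            _ ≤ T + 2*ρ := by rw [dist_comm a (yf a)]; exact add_le_add h4 h2
        have hcell : ∀ a ∈ Sσ, P a ∩ K ⊆ closedBall (ctr σs) (3*T) := by
          intro a ha y hy
          have haα := hSσα a ha
          have h1 : dist y a = infDist y (α : Set E) := hP.2.2.2.2 a haα hy.1
          have h2 : dist y a ≤ T := h1 ▸ hTle _ hy.2
          have h3 := hnear a ha
          exact mem_closedBall.2 (by
            calc dist y (ctr σs) ≤ dist y a + dist a (ctr σs) := dist_triangle _ _ _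
              _ ≤ T + (T + 2*ρ) := add_le_add h2 h3
              _ ≤ 3*T := by linarith)
        -- sum of cell measures
        have hsum : ∑ a ∈ Sσ, μ (P a ∩ K) ≤ ENNReal.ofReal (C2 * (3*T) ^ s0) := by
          have hdisj : (↑Sσ : Set E).PairwiseDisjoint (fun a => P a ∩ K) := by
            intro a ha b hb hab
            exact Disjoint.mono inter_subset_left inter_subset_left
              (hP.2.2.1 a (hSσα a ha) b (hSσα b hb) hab)
          have hmeas' : ∀ a ∈ Sσ, MeasurableSet (P a ∩ K) :=
            fun a ha => (hP.1 a (hSσα a ha)).inter hKmeas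
          calc ∑ a ∈ Sσ, μ (P a ∩ K) = μ (⋃ a ∈ Sσ, P a ∩ K) :=
                (measure_biUnion_finset hdisj hmeas').symm
            _ ≤ μ (closedBall (ctr σs) (3*T)) := by
                apply measure_mono
                exact iUnion₂_subset fun a ha => hcell a ha
            _ ≤ ENNReal.ofReal (C2 * (3*T) ^ s0) := hglob _ _ (by linarith)
        have hsumR : ∑ a ∈ Sσ, (μ (P a)).toReal ≤ C2 * (3*T) ^ s0 := by
          have heq : ∀ a ∈ Sσ, μ (P a) = μ (P a ∩ K) := by
            intro a _
            exact (measure_inter_conull (msupp_compl_null μ)).symm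
          calc ∑ a ∈ Sσ, (μ (P a)).toReal = ∑ a ∈ Sσ, (μ (P a ∩ K)).toReal :=
                Finset.sum_congr rfl fun a ha => by rw [heq a ha]
            _ = (∑ a ∈ Sσ, μ (P a ∩ K)).toReal := by
                rw [ENNReal.toReal_sum]
                intro a _
                exact ne_of_lt (lt_of_le_of_lt (measure_mono (subset_univ _))
                  (by simp [lt_top_iff_ne_top]))
            _ ≤ C2 * (3*T) ^ s0 := by
                have := ENNReal.toReal_mono ENNReal.ofReal_ne_top hsum
                rwa [ENNReal.toReal_ofReal (by positivity)] at this
        -- minimal cell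
        have hSne : Sσ.Nonempty := Finset.card_pos.1 (lt_of_lt_of_le (show 0 < c by omega) hfib)
        have hmin : ∃ a' ∈ Sσ, (μ (P a')).toReal ≤ C2 * (3*T) ^ s0 / c := by
          apply Finset.exists_le_of_sum_le hSne
          calc ∑ a ∈ Sσ, (μ (P a)).toReal ≤ C2 * (3*T) ^ s0 := hsumR
            _ = c * (C2 * (3*T) ^ s0 / c) := by
                field_simp
            _ ≤ Sσ.card * (C2 * (3*T) ^ s0 / c) := by
                apply mul_le_mul_of_nonneg_right _ hW
                exact_mod_cast hfib
            _ = ∑ _a ∈ Sσ, (C2 * (3*T) ^ s0 / c) := by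
                rw [Finset.sum_const, nsmul_eq_mul]
        obtain ⟨a', ha'Sσ, ha'small⟩ := hmin
        have ha'α : a' ∈ α := hSσα a' ha'Sσ
        obtain ⟨a'', ha''Sσ, ha''ne⟩ := Finset.exists_mem_ne (lt_of_lt_of_le (show 1 < c by omega) hfib) a'
        have ha''α : a'' ∈ α := hSσα a'' ha''Sσ
        have hdista : dist a' a'' ≤ 2*T + 4*ρ := by
          have h1 := hnear a' ha'Sσ
          have h2 := hnear a'' ha''Sσ
          calc dist a' a'' ≤ dist a' (ctr σs) + dist (ctr σs) a'' := dist_triangle _ _ _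
            _ ≤ (T + 2*ρ) + (T + 2*ρ) := by
                rw [dist_comm (ctr σs) a'']; exact add_le_add h1 h2
            _ = 2*T + 4*ρ := by ring
        refine ⟨insert x (α.erase a'), ⟨x, Finset.mem_insert_self _ _⟩, ?_, P a',
          hP.1 a' ha'α, ha'small, ?_, ?_, by simp⟩
        · calc (insert x (α.erase a')).card ≤ (α.erase a').card + 1 :=
              Finset.card_insert_le _ _
            _ = (α.card - 1) + 1 := by rw [Finset.card_erase_of_mem ha'α]
            _ ≤ n := by omega
        · -- on S = P a' : bound via a''
          filter_upwards [hae] with y hyK hyS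
          have h1 : dist y a' = infDist y (α : Set E) := hP.2.2.2.2 a' ha'α hyS
          have h2 : dist y a' ≤ T := h1 ▸ hTle _ hyK
          have h3 : a'' ∈ insert x (α.erase a') :=
            Finset.mem_insert_of_mem (Finset.mem_erase.2 ⟨ha''ne, ha''α⟩)
          calc infDist y ((insert x (α.erase a') : Finset E) : Set E) ≤ dist y a'' :=
              infDist_le_dist_of_mem (by exact_mod_cast h3)
            _ ≤ dist y a' + dist a' a'' := dist_triangle _ _ _
            _ ≤ T + (2*T + 4*ρ) := add_le_add h2 hdista
            _ ≤ 4 * T := by linarith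
        · -- off S : some other cell
          intro y hyS
          have hyuniv : y ∈ ⋃ a ∈ α, P a := hP.2.1 ▸ mem_univ y
          simp only [mem_iUnion] at hyuniv
          obtain ⟨b, hbα, hyb⟩ := hyuniv
          have hbne : b ≠ a' := fun h => hyS (h ▸ hyb)
          have h1 : dist y b = infDist y (α : Set E) := hP.2.2.2.2 b hbα hyb
          have h2 : b ∈ insert x (α.erase a') :=
            Finset.mem_insert_of_mem (Finset.mem_erase.2 ⟨hbne, hbα⟩)
          calc infDist y ((insert x (α.erase a') : Finset E) : Set E) ≤ dist y b :=
              infDist_le_dist_of_mem (by exact_mod_cast h2)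
            _ = infDist y (α : Set E) := h1
      · -- some cell is null
        push_neg at hall
        obtain ⟨a0, ha0α, ha0null⟩ := hall
        refine ⟨insert x (α.erase a0), ⟨x, Finset.mem_insert_self _ _⟩, ?_, P a0,
          hP.1 a0 ha0α, by rw [ha0null]; simpa using hW, ?_, ?_, by simp⟩
        · calc (insert x (α.erase a0)).card ≤ (α.erase a0).card + 1 :=
              Finset.card_insert_le _ _
            _ = (α.card - 1) + 1 := by rw [Finset.card_erase_of_mem ha0α]
            _ ≤ n := by omega
        · have : ∀ᵐ y ∂μ, y ∉ P a0 := by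
            rw [ae_iff]
            simpa [ha0null] using ha0null
          filter_upwards [this] with y hy hyS
          exact absurd hyS hy
        · intro y hyS
          have hyuniv : y ∈ ⋃ a ∈ α, P a := hP.2.1 ▸ mem_univ y
          simp only [mem_iUnion] at hyuniv
          obtain ⟨b, hbα, hyb⟩ := hyuniv
          have hbne : b ≠ a0 := fun h => hyS (h ▸ hyb)
          have h1 : dist y b = infDist y (α : Set E) := hP.2.2.2.2 b hbα hyb
          have h2 : b ∈ insert x (α.erase a0) :=
            Finset.mem_insert_of_mem (Finset.mem_erase.2 ⟨hbne, hbα⟩)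
          calc infDist y ((insert x (α.erase a0) : Finset E) : Set E) ≤ dist y b :=
              infDist_le_dist_of_mem (by exact_mod_cast h2)
            _ = infDist y (α : Set E) := h1
  -- now derive the contradiction
  set B := closedBall x g with hB
  set G : ℝ := (T - g) ^ r - g ^ r with hG
  have hGpos : 0 < G := by
    rw [hG]
    have : g < T - g := by linarith
    have := Real.rpow_lt_rpow hgpos.le this hr
    linarith
  set h : E → ℝ := fun y =>
    S.indicator (fun _ => (4*T) ^ r) y + B.indicator (fun _ => -G) y with hh
  have hinth : Integrable h μ := by
    apply Integrable.add
    · exact (integrable_const _).indicator hSmeas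
    · exact (integrable_const _).indicator measurableSet_closedBall
  have hptwise : ∀ᵐ y ∂μ, (fun y => infDist y ((β : Finset E) : Set E) ^ r) y
      - (fun y => infDist y (α : Set E) ^ r) y ≤ h y := by
    filter_upwards [hSbound, hae] with y hyS hyK
    have hβval : (0:ℝ) ≤ infDist y ((β : Finset E) : Set E) := infDist_nonneg
    by_cases hyB : y ∈ B
    · -- gain region
      have h1 : infDist y ((β : Finset E) : Set E) ≤ g := by
        calc infDist y ((β : Finset E) : Set E) ≤ dist y x :=
            infDist_le_dist_of_mem hnotin
          _ ≤ g := mem_closedBall.1 hyB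
      have h2 : T - g ≤ infDist y (α : Set E) := by
        apply le_infDist_finset' hαne
        intro z hz
        have hxz : T ≤ dist x z := by
          rw [hT]
          exact infDist_le_dist_of_mem (by exact_mod_cast hz)
        have hyx : dist y x ≤ g := mem_closedBall.1 hyB
        calc T - g ≤ dist x z - dist y x := by linarith
          _ ≤ dist y z := by
              have := dist_triangle x y z
              rw [dist_comm y x] at *
              linarith [dist_triangle x y z]
      have h3 : infDist y ((β : Finset E) : Set E) ^ r ≤ g ^ r :=
        Real.rpow_le_rpow infDist_nonneg h1 hr.le
      have h4 : (T - g) ^ r ≤ infDist y (α : Set E) ^ r :=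
        Real.rpow_le_rpow (by linarith) h2 hr.le
      have h5 : h y = S.indicator (fun _ => (4*T) ^ r) y + (-G) := by
        rw [hh]
        simp [Set.indicator_of_mem hyB]
      rw [h5, hG]
      have h6 : (0:ℝ) ≤ S.indicator (fun _ => (4*T) ^ r) y :=
        Set.indicator_nonneg (fun _ _ => by positivity) y
      linarith
    · by_cases hyS' : y ∈ S
      · have h1 : infDist y ((β : Finset E) : Set E) ≤ 4 * T := hyS hyS'
        have h2 : infDist y ((β : Finset E) : Set E) ^ r ≤ (4*T) ^ r :=
          Real.rpow_le_rpow infDist_nonneg h1 hr.le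
        have h3 : h y = (4*T) ^ r := by
          rw [hh]
          simp [Set.indicator_of_mem hyS', Set.indicator_of_notMem hyB]
        rw [h3]
        have : (0:ℝ) ≤ infDist y (α : Set E) ^ r := Real.rpow_nonneg infDist_nonneg r
        linarith
      · have h1 : infDist y ((β : Finset E) : Set E) ≤ infDist y (α : Set E) :=
          hoffS y hyS'
        have h2 : infDist y ((β : Finset E) : Set E) ^ r ≤ infDist y (α : Set E) ^ r :=
          Real.rpow_le_rpow infDist_nonneg h1 hr.le
        have h3 : h y = 0 := by
          rw [hh]
          simp [Set.indicator_of_notMem hyS', Set.indicator_of_notMem hyB]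
        rw [h3]
        linarith
  have hIh : ∫ y, h y ∂μ = (4*T) ^ r * (μ S).toReal - G * (μ B).toReal := by
    rw [hh, integral_add ((integrable_const _).indicator hSmeas)
      ((integrable_const _).indicator measurableSet_closedBall)]
    rw [integral_indicator_const _ hSmeas, integral_indicator_const _ measurableSet_closedBall]
    simp [smul_eq_mul, measureReal_def, hB]
    ring
  have hQr : T ^ r ≤ Q ^ r * g ^ r := by
    have := Real.rpow_le_rpow hTpos.le hTQ hr.le
    rwa [Real.mul_rpow hQpos.le hgpos.le] at this
  have hQs : T ^ s0 ≤ Q ^ s0 * g ^ s0 := by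
    have := Real.rpow_le_rpow hTpos.le hTQ hs0.le
    rwa [Real.mul_rpow hQpos.le hgpos.le] at this
  have h2r : (1:ℝ) < 2 ^ r := by
    exact (Real.one_lt_rpow_iff_of_pos (by norm_num)).2 (Or.inl ⟨by norm_num, hr⟩)
  have hGlow : (2 ^ r - 1) * g ^ r ≤ G := by
    rw [hG]
    have h1 : (2*g) ^ r ≤ (T - g) ^ r :=
      Real.rpow_le_rpow (by positivity) hg2 hr.le
    rw [Real.mul_rpow (by norm_num) hgpos.le] at h1
    linarith
  have hIhneg : ∫ y, h y ∂μ < 0 := by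
    rw [hIh]
    have h4T : (4*T) ^ r = 4 ^ r * T ^ r := Real.mul_rpow (by norm_num) hTpos.le
    have h3T : (3*T) ^ s0 = 3 ^ s0 * T ^ s0 := Real.mul_rpow (by norm_num) hTpos.le
    have hgr : (0:ℝ) < g ^ r := Real.rpow_pos_of_pos hgpos r
    have hgs : (0:ℝ) < g ^ s0 := Real.rpow_pos_of_pos hgpos s0
    have hTr : (0:ℝ) < T ^ r := Real.rpow_pos_of_pos hTpos r
    have hTs : (0:ℝ) < T ^ s0 := Real.rpow_pos_of_pos hTpos s0
    have hcpos : (0:ℝ) < c := by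
      have : (2:ℝ) ≤ c := by exact_mod_cast hc2
      linarith
    have key : 4 ^ r * T ^ r * (C2 * (3 ^ s0 * T ^ s0) / c) <
        (2 ^ r - 1) * g ^ r * (C1 * g ^ s0) := by
      have hQrpos : (0:ℝ) < Q ^ r := Real.rpow_pos_of_pos hQpos r
      have hQspos : (0:ℝ) < Q ^ s0 := Real.rpow_pos_of_pos hQpos s0
      have h4rpos : (0:ℝ) < (4:ℝ) ^ r := Real.rpow_pos_of_pos (by norm_num) r
      have h3spos : (0:ℝ) < (3:ℝ) ^ s0 := Real.rpow_pos_of_pos (by norm_num) s0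
      have hdenpos : (0:ℝ) < C1 * (2 ^ r - 1) := by
        apply mul_pos hC1; linarith
      -- from hcbig : S0 / (C1*(2^r-1)) < c with S0 = 4^r*3^s0*Q^r*Q^s0*C2
      have hS0 : (4:ℝ)^r * 3^s0 * Q^r * Q^s0 * C2 < c * (C1 * (2^r - 1)) := by
        rw [div_lt_iff₀ hdenpos] at hcbig
        linarith
      -- LHS ≤ 4^r*3^s0*C2/c * T^r*T^s0 ≤ ... bound T powers by Q*g powers
      have hL1 : 4 ^ r * T ^ r * (C2 * (3 ^ s0 * T ^ s0) / c)
          ≤ 4 ^ r * 3 ^ s0 * Q ^ r * Q ^ s0 * C2 * (g ^ r * g ^ s0) / c := by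
        have e2 : T ^ r * T ^ s0 ≤ (Q ^ r * g ^ r) * (Q ^ s0 * g ^ s0) := by
          apply mul_le_mul hQr hQs hTs.le (by positivity)
        have hXY : 4 ^ r * T ^ r * (C2 * (3 ^ s0 * T ^ s0))
            ≤ 4 ^ r * 3 ^ s0 * Q ^ r * Q ^ s0 * C2 * (g ^ r * g ^ s0) := by
          nlinarith [mul_pos h4rpos h3spos, mul_pos (mul_pos h4rpos h3spos) hC2]
        calc 4 ^ r * T ^ r * (C2 * (3 ^ s0 * T ^ s0) / c)
            = (4 ^ r * T ^ r * (C2 * (3 ^ s0 * T ^ s0))) * (1/(c:ℝ)) := by ring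
          _ ≤ (4 ^ r * 3 ^ s0 * Q ^ r * Q ^ s0 * C2 * (g ^ r * g ^ s0)) * (1/(c:ℝ)) :=
              mul_le_mul_of_nonneg_right hXY (by positivity)
          _ = 4 ^ r * 3 ^ s0 * Q ^ r * Q ^ s0 * C2 * (g ^ r * g ^ s0) / c := by ring
      have hR1 : 4 ^ r * 3 ^ s0 * Q ^ r * Q ^ s0 * C2 * (g ^ r * g ^ s0) / c
          < (2 ^ r - 1) * g ^ r * (C1 * g ^ s0) := by
        rw [div_lt_iff₀ hcpos]
        calc 4 ^ r * 3 ^ s0 * Q ^ r * Q ^ s0 * C2 * (g ^ r * g ^ s0)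
            < (c * (C1 * (2 ^ r - 1))) * (g ^ r * g ^ s0) := by
              apply mul_lt_mul_of_pos_right hS0 (by positivity)
          _ = (2 ^ r - 1) * g ^ r * (C1 * g ^ s0) * c := by ring
      linarith
    have hμS : (μ S).toReal ≤ C2 * (3*T) ^ s0 / c := hSsmall
    have hμSnn : (0:ℝ) ≤ (μ S).toReal := ENNReal.toReal_nonneg
    have hμB : C1 * g ^ s0 ≤ (μ B).toReal := hgain
    have h4Tpos : (0:ℝ) ≤ (4*T) ^ r := Real.rpow_nonneg (by linarith) r
    have hstep1 : (4*T) ^ r * (μ S).toReal ≤ (4*T) ^ r * (C2 * (3*T) ^ s0 / c) :=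
      mul_le_mul_of_nonneg_left hμS h4Tpos
    have hstep2 : G * (C1 * g ^ s0) ≤ G * (μ B).toReal :=
      mul_le_mul_of_nonneg_left hμB hGpos.le
    have hmid : (4*T) ^ r * (C2 * (3*T) ^ s0 / c) < G * (C1 * g ^ s0) := by
      rw [h4T, h3T]
      calc 4 ^ r * T ^ r * (C2 * (3 ^ s0 * T ^ s0) / c)
          < (2 ^ r - 1) * g ^ r * (C1 * g ^ s0) := key
        _ ≤ G * (C1 * g ^ s0) := by
            apply mul_le_mul_of_nonneg_right hGlow (by positivity)
    exact sub_neg.2 (lt_of_le_of_lt hstep1 (lt_of_lt_of_le hmid hstep2))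
  -- integral comparison
  have hβint := hint β hβne
  have hαint := hint α hαne
  have hcomp : (∫ y, infDist y ((β : Finset E) : Set E) ^ r ∂μ)
      - (∫ y, infDist y (α : Set E) ^ r ∂μ) ≤ ∫ y, h y ∂μ := by
    rw [← integral_sub hβint hαint]
    exact integral_mono_ae (hβint.sub hαint) hinth hptwise
  have hcontra := optimal_le' hopt β hβne hβc
  linarith
end CoveringRadius

end AuxLemmas

/-- There is a positive integer `c` such that for every `k ≥ k0`, every
`n ≥ c·φ_k`, every `n`-optimal set `α`, every Voronoi partition `P` and every `a ∈ α`: the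
index set `Γ = {σ ∈ Ω_k : d(a,c_σ) ≤ (13/2)m^{-k}}` has at most `(15/2)^q` elements and
`P_a(α) ∩ K ⊆ ⋃_{σ∈Γ} A_σ`. -/
theorem stmt18 {E : Type*} [NormedAddCommGroup E] [NormedSpace ℝ E]
    [MeasurableSpace E] [BorelSpace E] [FiniteDimensional ℝ E]
    (q : ℕ) (hq : Module.finrank ℝ E = q)
    (r : ℝ) (hr : 0 < r)
    (μ : MeasureTheory.Measure E) [MeasureTheory.IsProbabilityMeasure μ]
    (s0 ε0 C1 C2 : ℝ) (hμ : IsAhlfors μ s0 ε0 C1 C2)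
    (m : ℕ) (hm : 2 ≤ m) (k0 : ℕ)
    (hk0 : 2 * ((m : ℝ) ^ k0)⁻¹ < ε0)
    (hk0min : ∀ j : ℕ, 2 * ((m : ℝ) ^ j)⁻¹ < ε0 → k0 ≤ j)
    (φ : ℕ → ℕ)
    (hφ : ∀ k, k0 ≤ k →
      IsGreatest {j | PackingNum (msupp μ) (((m : ℝ) ^ k)⁻¹) j} (φ k))
    (ctr : (k : ℕ) → Fin (φ k) → E)
    (hctr : ∀ k, k0 ≤ k → (∀ i, ctr k i ∈ msupp μ) ∧
      Pairwise fun i i' => Disjoint (Metric.closedBall (ctr k i) (((m : ℝ) ^ k)⁻¹))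
        (Metric.closedBall (ctr k i') (((m : ℝ) ^ k)⁻¹))) :
    ∃ c : ℕ, 0 < c ∧
      ∀ k, k0 ≤ k → ∀ n : ℕ, c * φ k ≤ n → ∀ α : Finset E, IsOptimalSet μ r n α →
        ∀ P : E → Set E, IsVoronoiPartition α P → ∀ a ∈ α,
          (({σ : Fin (φ k) |
              dist a (ctr k σ) ≤ (13 / 2 : ℝ) * ((m : ℝ) ^ k)⁻¹}.ncard : ℝ)
            ≤ (15 / 2 : ℝ) ^ q) ∧
          P a ∩ msupp μ ⊆
            ⋃ σ ∈ {σ : Fin (φ k) | dist a (ctr k σ) ≤ (13 / 2 : ℝ) * ((m : ℝ) ^ k)⁻¹},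
              Metric.closedBall (ctr k σ) (2 * ((m : ℝ) ^ k)⁻¹) := by
  classical
  have hs0 : 0 < s0 := hμ.1
  have hε0 : 0 < ε0 := hμ.2.1
  have hC1 : 0 < C1 := hμ.2.2.1
  have hC2 : 0 < C2 := hμ.2.2.2.1
  have hm1 : (1:ℝ) ≤ (m:ℝ) := by
    have : (2:ℝ) ≤ (m:ℝ) := by exact_mod_cast hm
    linarith
  have hmpos : (0:ℝ) < (m:ℝ) := by linarith
  set K := msupp μ with hK
  have hKne : K.Nonempty := msupp_nonempty μ
  obtain ⟨z0, hz0⟩ := hKne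
  -- boundedness of the support via the packing bound at scale k0
  have hρ0 : (0:ℝ) < ((m:ℝ) ^ k0)⁻¹ := by positivity
  have hKbdd : Bornology.IsBounded K :=
    bounded_of_packing K hρ0 (φ k0) (fun j hj => (hφ k0 le_rfl).2 hj)
  obtain ⟨R0, hR0⟩ := hKbdd.subset_closedBall z0
  set R : ℝ := max R0 1 with hR
  have hR1 : 1 ≤ R := le_max_right _ _
  have hKb : K ⊆ closedBall z0 R :=
    hR0.trans (closedBall_subset_closedBall (le_max_left _ _))
  -- choice of the constant c
  set Q : ℝ := max 3 (8*R/ε0) with hQ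
  set creal : ℝ := (4:ℝ)^r * 3^s0 * Q^r * Q^s0 * C2 / (C1 * ((2:ℝ)^r - 1)) with hcreal
  set c : ℕ := max 2 (⌈creal⌉₊ + 1) with hc
  have hc2 : 2 ≤ c := le_max_left _ _
  have hcbig : creal < (c:ℝ) := by
    have h1 : creal ≤ (⌈creal⌉₊ : ℝ) := Nat.le_ceil _
    have h2 : ((⌈creal⌉₊ + 1 : ℕ) : ℝ) ≤ (c:ℝ) := by
      exact_mod_cast Nat.cast_le.2 (le_max_right 2 (⌈creal⌉₊ + 1))
    push_cast at h2
    linarith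
  refine ⟨c, by omega, ?_⟩
  intro k hk n hn α hopt P hVor a ha
  set ρ : ℝ := ((m:ℝ) ^ k)⁻¹ with hρdef
  have hρ : (0:ℝ) < ρ := by positivity
  have hctrk := hctr k hk
  have hφk := hφ k hk
  -- φ k ≥ 1
  have hφ1 : 1 ≤ φ k := by
    have h1 : PackingNum K ρ 1 := by
      refine ⟨fun _ => z0, fun _ => hz0, ?_⟩
      intro i j hij
      exact absurd (Subsingleton.elim i j) hij
    exact hφk.2 h1
  -- every point of the support is near some center
  have hcov : ∀ x ∈ K, ∃ σ, dist x (ctr k σ) ≤ 2 * ρ := fun x hx =>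
    exists_near_center hρ hφk (ctr k) hctrk.1 hctrk.2 hx
  -- covering radius bound
  have hcovrad : ∀ x ∈ K, infDist x (α : Set E) ≤ (9/2) * ρ :=
    covering_radius hr μ ⟨hs0, hε0, hC1, hC2, hμ.2.2.2.2.1, hμ.2.2.2.2.2⟩
      hR1 hKb hz0 hρ hφ1 (ctr k) hcov hc2 hcbig hn hopt hVor
  constructor
  · exact count_lemma hq hρ (ctr k) hctrk.2 a
  · intro y hy
    obtain ⟨σ, hσ⟩ := hcov y hy.2
    have h1 : dist y a = infDist y (α : Set E) := hVor.2.2.2.2 a ha hy.1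
    have h2 : dist y a ≤ (9/2) * ρ := h1 ▸ hcovrad y hy.2
    have h3 : dist a (ctr k σ) ≤ (13/2 : ℝ) * ρ := by
      calc dist a (ctr k σ) ≤ dist a y + dist y (ctr k σ) := dist_triangle _ _ _
        _ ≤ (9/2) * ρ + 2 * ρ := by
            rw [dist_comm a y]; exact add_le_add h2 hσ
        _ = (13/2 : ℝ) * ρ := by ring
    exact mem_biUnion h3 (mem_closedBall.2 hσ)
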